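/- Let X be a non-separable complex Banach space having the NIP and let P : X → ℂ be a nonzero continuous 2-homogeneous polynomial. Then every P-maximal subspace of X is non-separable. -/

import Mathlib

/-- `P : X → ℂ` is an `n`-homogeneous polynomial: there is a symmetric `n`-linear form `A`
with `P x = A (x, …, x)`. -/
def IsHomogPoly {X : Type*} [NormedAddCommGroup X] [NormedSpace ℂ X]
    (n : ℕ) (P : X → ℂ) : Prop :=
  ∃ A : MultilinearMap ℂ (fun _ : Fin n => X) ℂ,
    (∀ (σ : Equiv.Perm (Fin n)) (v : Fin n → X), (A fun i => v (σ i)) = A v) ∧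
    ∀ x, P x = A fun _ => x

/-- `P` is a continuous `n`-homogeneous polynomial. -/
def IsContHomogPoly {X : Type*} [NormedAddCommGroup X] [NormedSpace ℂ X]
    (n : ℕ) (P : X → ℂ) : Prop :=
  IsHomogPoly n P ∧ ∃ C : ℝ, ∀ x, ‖P x‖ ≤ C * ‖x‖ ^ n

/-- `M` is a `P`-maximal subspace. -/
def IsPMaximal {X : Type*} [NormedAddCommGroup X] [NormedSpace ℂ X]
    (P : X → ℂ) (M : Submodule ℂ X) : Prop :=
  M ≠ ⊤ ∧ (∀ x ∈ M, P x = 0) ∧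
    ∀ M₁ : Submodule ℂ X, M ≤ M₁ → (∀ x ∈ M₁, P x = 0) → M₁ = M

/-- `X` has the nontrivial intersection property (NIP). -/
def HasNIP (X : Type*) [NormedAddCommGroup X] [NormedSpace ℂ X] : Prop :=
  ∀ φ : ℕ → (X →L[ℂ] ℂ), (⨅ i, LinearMap.ker (φ i : X →ₗ[ℂ] ℂ)) ≠ ⊥

lemma exists_good_B {X : Type*} [NormedAddCommGroup X] [NormedSpace ℂ X]
    {P : X → ℂ} (hP : IsContHomogPoly 2 P) :
    ∃ Φ : X → (X →L[ℂ] ℂ), (∀ x y, Φ x y = Φ y x) ∧ ∀ x, P x = Φ x x := by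
  obtain ⟨⟨A, hsym, hPA⟩, C, hC⟩ := hP
  set b : X → X → ℂ := fun x y => A ![x, y] with hb
  have hupd1 : ∀ (x y y' : X), Function.update ![x, y] (1 : Fin 2) y' = ![x, y'] := by
    intro x y y'
    funext i
    fin_cases i <;> simp [Function.update]
  have badd2 : ∀ x y y', b x (y + y') = b x y + b x y' := by
    intro x y y'
    have := A.map_update_add ![x, y] 1 y y'
    simpa [hupd1] using this
  have bsmul2 : ∀ (t : ℂ) x y, b x (t • y) = t * b x y := by
    intro t x y
    have := A.map_update_smul ![x, y] 1 t y
    simpa [hupd1, smul_eq_mul] using this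
  have bsym : ∀ x y, b x y = b y x := by
    intro x y
    have h := hsym (Equiv.swap 0 1) ![y, x]
    have h2 : (fun i => ![y, x] ((Equiv.swap (0:Fin 2) 1) i)) = ![x, y] := by
      funext i; fin_cases i <;> simp [Equiv.swap_apply_of_ne_of_ne]
    rw [h2] at h
    exact h
  have hPb : ∀ x, P x = b x x := by
    intro x
    rw [hPA x]
    congr 1
    funext i; fin_cases i <;> simp
  have hC' : ∀ x, ‖P x‖ ≤ |C| * ‖x‖ ^ 2 := by
    intro x
    calc ‖P x‖ ≤ C * ‖x‖ ^ 2 := hC x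
    _ ≤ |C| * ‖x‖ ^ 2 := by
      gcongr; exact le_abs_self C
  have hpol : ∀ x y, b x y = (P (x + y) - P x - P y) / 2 := by
    intro x y
    have e : P (x + y) = b x x + b x y + (b x y + b y y) := by
      rw [hPb (x + y)]
      have h1 : b (x+y) (x+y) = b (x+y) x + b (x+y) y := badd2 _ _ _
      rw [h1, bsym (x+y) x, bsym (x+y) y, badd2, badd2, bsym y x]
    rw [e, hPb x, hPb y]; ring
  have hbound : ∀ x y, ‖b x y‖ ≤ ((|C| * (‖x‖ + 1) ^ 2 + |C| * ‖x‖ ^ 2 + |C|) / 2) * ‖y‖ := by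
    intro x y
    rcases eq_or_ne y 0 with rfl | hy
    · have : b x 0 = 0 := by
        have := bsmul2 0 x 0; simpa using this
      simp [this]
    · have hny : (0:ℝ) < ‖y‖ := norm_pos_iff.2 hy
      set u : X := (‖y‖ : ℂ)⁻¹ • y with hu
      have hnu : ‖u‖ = 1 := by
        rw [hu, norm_smul]
        simp [norm_inv, hny.ne']
      have hyu : y = (‖y‖ : ℂ) • u := by
        rw [hu, smul_smul]
        rw [mul_inv_cancel₀ (by exact_mod_cast hny.ne')]
        simp
      have h1 : b x y = (‖y‖ : ℂ) * b x u := by rw [hyu] at *; rw [← bsmul2]; rw [← hyu]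
      rw [h1, norm_mul, Complex.norm_real, Real.norm_of_nonneg hny.le, mul_comm]
      gcongr
      rw [hpol]
      have h2 : ‖P (x + u)‖ ≤ |C| * (‖x‖ + 1)^2 := by
        calc ‖P (x+u)‖ ≤ |C| * ‖x + u‖ ^ 2 := hC' _
        _ ≤ |C| * (‖x‖ + 1)^2 := by
          have : ‖x + u‖ ≤ ‖x‖ + 1 := by
            calc ‖x + u‖ ≤ ‖x‖ + ‖u‖ := norm_add_le _ _
              _ = ‖x‖ + 1 := by rw [hnu]
          gcongr
      have h3 : ‖P x‖ ≤ |C| * ‖x‖^2 := hC' x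
      have h4 : ‖P u‖ ≤ |C| := by
        have := hC' u; rwa [hnu, one_pow, mul_one] at this
      calc ‖(P (x+u) - P x - P u)/2‖ = ‖P (x+u) - P x - P u‖ / 2 := by
            rw [norm_div]; norm_num
        _ ≤ (‖P (x+u)‖ + ‖P x‖ + ‖P u‖) / 2 := by
            gcongr
            calc ‖P (x+u) - P x - P u‖ ≤ ‖P (x+u) - P x‖ + ‖P u‖ := norm_sub_le _ _
              _ ≤ ‖P (x+u)‖ + ‖P x‖ + ‖P u‖ := by gcongr; exact norm_sub_le _ _
        _ ≤ (|C| * (‖x‖ + 1) ^ 2 + |C| * ‖x‖ ^ 2 + |C|) / 2 := by gcongr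
  refine ⟨fun x => LinearMap.mkContinuous
    { toFun := b x
      map_add' := badd2 x
      map_smul' := fun t y => by simpa [smul_eq_mul] using bsmul2 t x y }
    _ (hbound x), fun x y => ?_, fun x => ?_⟩
  · simpa using bsym x y
  · simpa using hPb x

lemma quad_root (a b c : ℂ) (ha : a ≠ 0) : ∃ t : ℂ, a * t ^ 2 + b * t + c = 0 := by
  obtain ⟨s, hs⟩ := IsAlgClosed.exists_pow_nat_eq (b ^ 2 - 4 * a * c) (n := 2) (by norm_num)
  refine ⟨(-b + s) / (2 * a), ?_⟩
  have key : a * ((-b + s) / (2 * a)) ^ 2 + b * ((-b + s) / (2 * a)) + c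
      = (s ^ 2 - (b ^ 2 - 4 * a * c)) / (4 * a) := by
    field_simp
    ring
  rw [key, hs]
  simp


open TopologicalSpace in
/-- If `X` is a non-separable complex Banach space with the NIP and `P` is a nonzero
continuous 2-homogeneous polynomial on `X`, then every `P`-maximal subspace is
non-separable. -/
theorem pMaximal_nonseparable_of_nip {X : Type*} [NormedAddCommGroup X] [NormedSpace ℂ X]
    [CompleteSpace X] (hX : ¬ TopologicalSpace.SeparableSpace X) (hNIP : HasNIP X)
    (P : X → ℂ) (hP : IsContHomogPoly 2 P) (hP0 : P ≠ 0) :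
    ∀ M : Submodule ℂ X, IsPMaximal P M → ¬ TopologicalSpace.IsSeparable (M : Set X) := by
  intro M hM hsep
  obtain ⟨hMtop, hMzero, hMmax⟩ := hM
  obtain ⟨Φ, hsymm, hdiag⟩ := exists_good_B hP
  -- first-argument linearity
  have hadd1 : ∀ x y z : X, Φ (x + y) z = Φ x z + Φ y z := by
    intro x y z
    rw [hsymm (x + y) z, map_add, hsymm z x, hsymm z y]
  have hsmul1 : ∀ (t : ℂ) (x z : X), Φ (t • x) z = t * Φ x z := by
    intro t x z
    rw [hsymm (t • x) z, map_smul, hsymm z x, smul_eq_mul]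
  have expand : ∀ (x y : X) (t : ℂ),
      P (x + t • y) = Φ x x + 2 * t * Φ x y + t ^ 2 * Φ y y := by
    intro x y t
    rw [hdiag]
    simp only [hadd1, map_add, hsmul1, map_smul, smul_eq_mul]
    rw [hsymm y x]
    ring
  -- Φ vanishes on M × M
  have hBM : ∀ m ∈ M, ∀ m' ∈ M, Φ m m' = (0 : ℂ) := by
    intro m hm m' hm'
    have h1 : P (m + (1 : ℂ) • m') = 0 := by
      rw [one_smul]; exact hMzero _ (add_mem hm hm')
    rw [expand m m' 1] at h1
    have h2 : Φ m m = 0 := by rw [← hdiag]; exact hMzero m hm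
    have h3 : Φ m' m' = 0 := by rw [← hdiag]; exact hMzero m' hm'
    rw [h2, h3] at h1
    have : (2 : ℂ) * Φ m m' = 0 := by linear_combination h1
    have h4 : (2 : ℂ) ≠ 0 := two_ne_zero
    exact (mul_eq_zero.1 this).resolve_left h4
  -- countable dense subset of M
  obtain ⟨c, hcM, hcc, hcd⟩ := hsep.exists_countable_dense_subset
  obtain ⟨d, hd⟩ := (hcc.insert 0).exists_eq_range (Set.insert_nonempty 0 c)
  have hdM : ∀ n, d n ∈ M := by
    intro n
    have : d n ∈ insert (0 : X) c := hd ▸ Set.mem_range_self n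
    rcases this with h | h
    · rw [h]; exact zero_mem M
    · exact hcM h
  have hdense : (M : Set X) ⊆ closure (Set.range d) := by
    rw [← hd]
    exact hcd.trans (closure_mono (Set.subset_insert 0 c))
  set Nset : Set X := {z | ∀ n, Φ (d n) z = 0} with hNset
  -- every element of N is Φ-orthogonal to M
  have hNM : ∀ z ∈ Nset, ∀ m ∈ M, Φ m z = 0 := by
    intro z hz m hm
    have hclosed : IsClosed {x : X | Φ z x = 0} :=
      isClosed_eq (Φ z).continuous continuous_const
    have hrange : Set.range d ⊆ {x : X | Φ z x = 0} := by
      rintro _ ⟨n, rfl⟩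
      show Φ z (d n) = 0
      rw [← hsymm]
      exact hz n
    have : (M : Set X) ⊆ {x : X | Φ z x = 0} :=
      hdense.trans (closure_minimal hrange hclosed)
    have := this hm
    rw [hsymm m z]
    exact this
  -- N ∩ {P = 0} ⊆ M
  have hNPM : ∀ z ∈ Nset, P z = 0 → z ∈ M := by
    intro z hz hPz
    have hvan : ∀ x ∈ M ⊔ Submodule.span ℂ {z}, P x = 0 := by
      intro x hx
      rw [Submodule.mem_sup] at hx
      obtain ⟨m, hm, s, hs, rfl⟩ := hx
      rw [Submodule.mem_span_singleton] at hs
      obtain ⟨t, rfl⟩ := hs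
      rw [expand m z t]
      have h2 : Φ m m = 0 := by rw [← hdiag]; exact hMzero m hm
      have h3 : Φ z z = 0 := by rw [← hdiag]; exact hPz
      have h4 : Φ m z = 0 := hNM z hz m hm
      rw [h2, h3, h4]
      ring
    have heq := hMmax _ le_sup_left hvan
    rw [← heq]
    exact Submodule.mem_sup_right (Submodule.mem_span_singleton_self z)
  -- N is separable
  have h0N : (0 : X) ∈ Nset := by intro n; simp
  have hNsep : IsSeparable Nset := by
    by_cases hcase : ∀ z ∈ Nset, P z = 0
    · exact hsep.mono fun z hz => hNPM z hz (hcase z hz)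
    · push_neg at hcase
      obtain ⟨w, hw, hPw⟩ := hcase
      have himg : Nset ⊆ (fun p : X × ℂ => p.1 + p.2 • w) '' ((M : Set X) ×ˢ (Set.univ : Set ℂ)) := by
        intro z hz
        have hPww : Φ w w ≠ 0 := by rw [← hdiag]; exact hPw
        obtain ⟨t, ht⟩ := quad_root (Φ w w) (2 * Φ z w) (P z) hPww
        have hmem : z + t • w ∈ Nset := by
          intro n
          rw [map_add, map_smul, hz n, hw n]
          simp
        have hPzt : P (z + t • w) = 0 := by
          rw [expand z w t, ← hdiag z]
          linear_combination ht
        have hzM : z + t • w ∈ M := hNPM _ hmem hPzt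
        refine ⟨(z + t • w, -t), ⟨hzM, trivial⟩, ?_⟩
        simp only [neg_smul]
        abel
      have himgsep : IsSeparable ((fun p : X × ℂ => p.1 + p.2 • w) ''
          ((M : Set X) ×ˢ (Set.univ : Set ℂ))) := by
        refine (hsep.prod (IsSeparable.of_separableSpace Set.univ)).image ?_
        exact continuous_fst.add (continuous_snd.smul continuous_const)
      exact himgsep.mono himg
  -- countable dense subset of N
  obtain ⟨t', ht'N, ht'c, ht'd⟩ := hNsep.exists_countable_dense_subset
  obtain ⟨y, hy⟩ := (ht'c.insert 0).exists_eq_range (Set.insert_nonempty 0 t')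
  have hyN : ∀ k, y k ∈ Nset := by
    intro k
    have : y k ∈ insert (0 : X) t' := hy ▸ Set.mem_range_self k
    rcases this with h | h
    · rw [h]; exact h0N
    · exact ht'N h
  have hyd : Nset ⊆ closure (Set.range y) := by
    rw [← hy]
    exact ht'd.trans (closure_mono (Set.subset_insert 0 t'))
  -- separating functionals for N
  classical
  set ψ : ℕ → (X →L[ℂ] ℂ) := fun k =>
    if h : y k = 0 then 0 else (exists_dual_vector ℂ (y k) (norm_ne_zero_iff.2 h)).choose with hψdef
  -- the combined family
  set fam : ℕ → (X →L[ℂ] ℂ) := fun n =>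
    if Even n then Φ (d (n / 2)) else ψ (n / 2) with hfam
  have hbot := hNIP fam
  rw [Submodule.ne_bot_iff] at hbot
  obtain ⟨v, hv, hv0⟩ := hbot
  have hvK : ∀ n, fam n v = 0 := by
    intro n
    have := (Submodule.mem_iInf _).1 hv n
    exact this
  have hvN : v ∈ Nset := by
    intro n
    have h1 := hvK (2 * n)
    have h2 : fam (2 * n) = Φ (d n) := by
      rw [hfam]
      simp only
      rw [if_pos (even_two_mul n)]
      congr 2
      omega
    rwa [h2] at h1
  have hψv : ∀ k, ψ k v = 0 := by
    intro k
    have h1 := hvK (2 * k + 1)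
    have h2 : fam (2 * k + 1) = ψ k := by
      rw [hfam]
      simp only
      rw [if_neg (by simp [Nat.even_add_one, parity_simps])]
      congr 1
      omega
    rwa [h2] at h1
  -- derive the contradiction
  have hvpos : (0 : ℝ) < ‖v‖ := norm_pos_iff.2 hv0
  have hvcl : v ∈ closure (Set.range y) := hyd hvN
  rw [Metric.mem_closure_iff] at hvcl
  obtain ⟨b, hbmem, hbd⟩ := hvcl (‖v‖ / 3) (by positivity)
  obtain ⟨k, rfl⟩ := hbmem
  have hyk0 : y k ≠ 0 := by
    intro h0
    rw [h0, dist_zero_right] at hbd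
    linarith
  have hgspec := (exists_dual_vector ℂ (y k) (norm_ne_zero_iff.2 hyk0)).choose_spec
  set g : X →L[ℂ] ℂ := (exists_dual_vector ℂ (y k) (norm_ne_zero_iff.2 hyk0)).choose with hg
  obtain ⟨hg1, hg2⟩ := hgspec
  have hgv : g v = 0 := by
    have := hψv k
    simp only [hψdef, dif_neg hyk0] at this
    exact this
  have hdist : ‖y k - v‖ < ‖v‖ / 3 := by
    rwa [dist_eq_norm, norm_sub_rev] at hbd
  have hyklb : (2 : ℝ) / 3 * ‖v‖ ≤ ‖y k‖ := by
    have : ‖v‖ ≤ ‖y k‖ + ‖y k - v‖ := by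
      calc ‖v‖ = ‖y k - (y k - v)‖ := by congr 1; abel
        _ ≤ ‖y k‖ + ‖y k - v‖ := norm_sub_le _ _
    linarith
  have hykub : ‖y k‖ < ‖v‖ / 3 := by
    have e1 : g (y k) = g (y k - v) := by rw [map_sub, hgv, sub_zero]
    have e2 : ‖g (y k)‖ = ‖y k‖ := by
      rw [hg2]
      simp [Real.norm_of_nonneg (norm_nonneg _)]
    have e3 : ‖g (y k - v)‖ ≤ ‖g‖ * ‖y k - v‖ := g.le_opNorm _
    rw [hg1, one_mul] at e3
    calc ‖y k‖ = ‖g (y k)‖ := e2.symm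
      _ = ‖g (y k - v)‖ := by rw [e1]
      _ ≤ ‖y k - v‖ := e3
      _ < ‖v‖ / 3 := hdist
  linarith
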